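/- In the commutative monoid Q presented by ⟨x, z, a, b | x² = 1, a² = 1, z⁴ = z², b⁴ = b², abz = b, b³x = b², z³a = z²⟩, the element x*z²*a*b³ equals z*b². (This computes the quotient value of the 0.123 position with heaps 1, 3, 4, 8, 9, 21.) -/
import Mathlib

/-- In the misère quotient of 0.123, `x * z² * a * b³ = z * b²`. -/
theorem stmt12 {Q : Type*} [CommMonoid Q] (x z a b : Q)
    (hx : x ^ 2 = 1) (ha : a ^ 2 = 1) (hz : z ^ 4 = z ^ 2) (hb : b ^ 4 = b ^ 2)
    (habz : a * b * z = b) (hbx : b ^ 3 * x = b ^ 2) (hza : z ^ 3 * a = z ^ 2) :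
    x * z ^ 2 * a * b ^ 3 = z * b ^ 2 := by
  calc x * z ^ 2 * a * b ^ 3 = z ^ 2 * a * (b ^ 3 * x) := by simp [pow_succ, mul_assoc, mul_comm, mul_left_comm]
    _ = z ^ 2 * a * b ^ 2 := by rw [hbx]
    _ = z * (a * b * z * b) := by simp [pow_succ, mul_assoc, mul_comm, mul_left_comm]
    _ = z * (b * b) := by rw [habz]
    _ = z * b ^ 2 := by simp [pow_succ, mul_assoc, mul_comm, mul_left_comm]
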